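/- Let 1 ≤ j < i ≤ n and 1 ≤ k ≤ i−j. Then the one-line notation of w_k^{(i,j)} is determined as follows: w_k^{(i,j)}(j) = i−k+1, w_k^{(i,j)}(i) = i−k, and the remaining values {1, …, n} \ {i−k, i−k+1} occupy the remaining positions in increasing order; in particular, for all positions r < s with r, s ∉ {j, i}, one has w_k^{(i,j)}(r) < w_k^{(i,j)}(s). -/
import Mathlib


open MvPolynomial Finset

/-- The product of simple transpositions `s_a s_{a-1} ⋯ s_b` (descending indices),
where `s_r` interchanges `r` and `r+1`; the empty product (when `a < b`) is the identity. -/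
def sdesc (a b : ℕ) : Equiv.Perm ℕ :=
  (((List.range' b (a + 1 - b)).reverse).map (fun r => Equiv.swap r (r + 1))).prod

/-- The product of simple transpositions `s_a s_{a+1} ⋯ s_b` (ascending indices);
the empty product (when `b < a`) is the identity. -/
def sasc (a b : ℕ) : Equiv.Perm ℕ :=
  ((List.range' a (b + 1 - a)).map (fun r => Equiv.swap r (r + 1))).prod

/-- The permutation `w_k^{(i,j)} = (s_{i-k} s_{i-k-1} ⋯ s_j)(s_{i-k+1} s_{i-k+2} ⋯ s_{i-1})`,
regarded as a permutation of `ℕ` (supported on `{1, …, n}`). -/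
def wkij (i j k : ℕ) : Equiv.Perm ℕ := sdesc (i - k) j * sasc (i - k + 1) (i - 1)

lemma sdesc_succ (a b : ℕ) (h : b ≤ a + 1) :
    sdesc (a + 1) b = Equiv.swap (a + 1) (a + 2) * sdesc a b := by
  unfold sdesc
  have h1 : a + 1 + 1 - b = (a + 1 - b) + 1 := by omega
  have h2 : b + (a + 1 - b) = a + 1 := by omega
  rw [h1, List.range'_concat, List.reverse_append, List.map_append, List.prod_append]
  simp [h2]

lemma sdesc_base (b : ℕ) : sdesc b b = Equiv.swap b (b + 1) := by
  unfold sdesc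
  have : b + 1 - b = 1 := by omega
  simp [this, List.range']

lemma sdesc_apply (a b x : ℕ) (h : b ≤ a) :
    sdesc a b x = if x = b then a + 1 else if b < x ∧ x ≤ a + 1 then x - 1 else x := by
  induction a, h using Nat.le_induction with
  | base =>
    rw [sdesc_base]
    simp only [Equiv.swap_apply_def]
    split_ifs <;> omega
  | succ a ha ih =>
    rw [sdesc_succ a b (by omega), Equiv.Perm.mul_apply, ih]
    simp only [Equiv.swap_apply_def]
    split_ifs <;> omega

lemma sasc_succ (a b : ℕ) (h : a ≤ b + 1) :
    sasc a (b + 1) = sasc a b * Equiv.swap (b + 1) (b + 2) := by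
  unfold sasc
  have h1 : b + 1 + 1 - a = (b + 1 - a) + 1 := by omega
  have h2 : a + (b + 1 - a) = b + 1 := by omega
  rw [h1, List.range'_concat, List.map_append, List.prod_append]
  simp [h2]

lemma sasc_base (a : ℕ) : sasc a a = Equiv.swap a (a + 1) := by
  unfold sasc
  have : a + 1 - a = 1 := by omega
  simp [this, List.range']

lemma sasc_empty (a b : ℕ) (h : b < a) : sasc a b = 1 := by
  unfold sasc
  have : b + 1 - a = 0 := by omega
  simp [this]

lemma sasc_apply (a b x : ℕ) (h : a ≤ b) :
    sasc a b x = if x = b + 1 then a else if a ≤ x ∧ x ≤ b then x + 1 else x := by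
  induction b, h using Nat.le_induction generalizing x with
  | base =>
    rw [sasc_base]
    simp only [Equiv.swap_apply_def]
    split_ifs <;> omega
  | succ b hb ih =>
    rw [sasc_succ a b (by omega), Equiv.Perm.mul_apply, ih]
    simp only [Equiv.swap_apply_def]
    split_ifs <;> omega

lemma wkij_apply (i j k x : ℕ) (hj : 1 ≤ j) (hji : j < i)
    (hk1 : 1 ≤ k) (hk : k ≤ i - j) :
    wkij i j k x = if x = j then i - k + 1 else if x = i then i - k
      else if j < x ∧ x ≤ i - k then x - 1
      else if i - k + 1 ≤ x ∧ x < i then x + 1 else x := by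
  have hjm : j ≤ i - k := by omega
  rw [wkij, Equiv.Perm.mul_apply]
  rcases eq_or_lt_of_le hk1 with h1 | h2
  · -- k = 1
    rw [sasc_empty _ _ (by omega), Equiv.Perm.one_apply,
      sdesc_apply _ _ _ hjm]
    split_ifs <;> omega
  · -- k ≥ 2
    rw [sasc_apply _ _ _ (by omega), sdesc_apply _ _ _ hjm]
    have hi : i - 1 + 1 = i := by omega
    rw [hi]
    split_ifs <;> omega

/-- one-line notation of `w_k^{(i,j)}`.  For `1 ≤ j < i ≤ n` and
`1 ≤ k ≤ i-j`: `w_k^{(i,j)}(j) = i-k+1`, `w_k^{(i,j)}(i) = i-k`, and the remaining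
values occupy the remaining positions in increasing order; in particular, for all
positions `r < s` in `{1, …, n}` with `r, s ∉ {j, i}`, one has
`w_k^{(i,j)}(r) < w_k^{(i,j)}(s)`. -/
theorem stmt13 (n i j k : ℕ) (hj : 1 ≤ j) (hji : j < i) (hin : i ≤ n)
    (hk1 : 1 ≤ k) (hk : k ≤ i - j) :
    wkij i j k j = i - k + 1 ∧
    wkij i j k i = i - k ∧
    ∀ r s, 1 ≤ r → r < s → s ≤ n → r ≠ j → r ≠ i → s ≠ j → s ≠ i →
      wkij i j k r < wkij i j k s := by
  refine ⟨?_, ?_, ?_⟩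
  · rw [wkij_apply i j k j hj hji hk1 hk]; simp
  · rw [wkij_apply i j k i hj hji hk1 hk]
    split_ifs <;> omega
  · intro r s h1 h2 h3 h4 h5 h6 h7
    rw [wkij_apply i j k r hj hji hk1 hk, wkij_apply i j k s hj hji hk1 hk]
    split_ifs <;> omega
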